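/- Let b > 0, R > 0, and let η : [R,∞) → ℝ be continuous with η(s) → 0 as s → ∞. Let w(s) = s ∫_s^∞ x^{−2} ( ∫_x^∞ ξ exp(−(b/4)(ξ² − x²)) η(ξ) dξ ) dx. Then for every s ∈ [R,∞): |s w'(s) − w(s)| ≤ (2/b) · sup_{ξ≥s} |η(ξ)| and |w(s)/s| ≤ (2/(b s)) · sup_{ξ≥s} |η(ξ)|. -/

import Mathlib

open Set Filter MeasureTheory


lemma hasDerivAt_kexp (b x t : ℝ) (hb : 0 < b) :
    HasDerivAt (fun t => -(2/b) * Real.exp (-(b / 4) * (t ^ 2 - x ^ 2)))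
      (t * Real.exp (-(b / 4) * (t ^ 2 - x ^ 2))) t := by
  have h0 : HasDerivAt (fun t : ℝ => t ^ 2 - x ^ 2) (2 * t) t := by
    simpa using (hasDerivAt_pow 2 t).sub_const (x ^ 2)
  have h1 := ((h0.const_mul (-(b / 4))).exp).const_mul (-(2/b))
  refine h1.congr_deriv ?_
  field_simp
  ring

lemma tendsto_kexp (b x : ℝ) (hb : 0 < b) :
    Tendsto (fun t : ℝ => -(2/b) * Real.exp (-(b / 4) * (t ^ 2 - x ^ 2))) atTop (nhds 0) := by
  have h1 : Tendsto (fun t : ℝ => -(b / 4) * (t ^ 2 - x ^ 2)) atTop atBot := by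
    have h2 : Tendsto (fun t : ℝ => t ^ 2 - x ^ 2) atTop atTop :=
      (tendsto_pow_atTop (by norm_num)).atTop_add tendsto_const_nhds
    have h3 : Tendsto (fun t : ℝ => b / 4 * (t ^ 2 - x ^ 2)) atTop atTop :=
      h2.const_mul_atTop (by positivity)
    simpa [neg_mul] using h3
  have := (Real.tendsto_exp_atBot.comp h1).const_mul (-(2/b))
  simpa using this

lemma kexp_integrableOn (b x : ℝ) (hb : 0 < b) (hx : 0 ≤ x) :
    IntegrableOn (fun ξ : ℝ => ξ * Real.exp (-(b / 4) * (ξ ^ 2 - x ^ 2))) (Ioi x) := by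
  apply integrableOn_Ioi_deriv_of_nonneg' (fun t _ => hasDerivAt_kexp b x t hb)
    (fun ξ hξ => mul_nonneg (hx.trans (le_of_lt hξ)) (Real.exp_pos _).le) (tendsto_kexp b x hb)

lemma kexp_integral (b x : ℝ) (hb : 0 < b) (hx : 0 ≤ x) :
    ∫ ξ in Ioi x, ξ * Real.exp (-(b / 4) * (ξ ^ 2 - x ^ 2)) = 2 / b := by
  rw [integral_Ioi_of_hasDerivAt_of_nonneg' (fun t _ => hasDerivAt_kexp b x t hb)
    (fun ξ hξ => mul_nonneg (hx.trans (le_of_lt hξ)) (Real.exp_pos _).le) (tendsto_kexp b x hb)]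
  simp

lemma invsq_integrableOn {s : ℝ} (hs : 0 < s) :
    IntegrableOn (fun x : ℝ => (x ^ 2)⁻¹) (Ioi s) := by
  apply integrableOn_Ioi_deriv_of_nonneg' (g := fun x => -x⁻¹)
    (fun x hx => by simpa using (hasDerivAt_inv (ne_of_gt (hs.trans_le hx))).fun_neg)
    (fun x hx => by positivity)
    (by simpa using tendsto_inv_atTop_zero.neg)

lemma invsq_integral {s : ℝ} (hs : 0 < s) :
    ∫ x in Ioi s, (x ^ 2)⁻¹ = s⁻¹ := by
  rw [integral_Ioi_of_hasDerivAt_of_nonneg' (g := fun x => -x⁻¹)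
    (fun x hx => by simpa using (hasDerivAt_inv (ne_of_gt (hs.trans_le hx))).fun_neg)
    (fun x hx => by positivity)
    (by simpa using tendsto_inv_atTop_zero.neg)]
  simp

lemma primitive_hasDerivWithinAt {f : ℝ → ℝ} {R x : ℝ} (hx : R ≤ x)
    (hint : IntegrableOn f (Ioi R)) (hc : ContinuousOn f (Ici R)) :
    HasDerivWithinAt (fun u => ∫ t in R..u, f t) (f x) (Ici R) x := by
  have hii : IntervalIntegrable f volume R x := by
    rw [intervalIntegrable_iff_integrableOn_Ioc_of_le hx]
    exact hint.mono_set Ioc_subset_Ioi_self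
  rcases eq_or_lt_of_le hx with rfl | hx'
  · exact intervalIntegral.integral_hasDerivWithinAt_right hii
      ⟨Ioi R, self_mem_nhdsWithin, hint.aestronglyMeasurable⟩
      ((hc R self_mem_Ici).mono Ioi_subset_Ici_self)
  · exact (intervalIntegral.integral_hasDerivAt_right hii
      ⟨Ioi R, Ioi_mem_nhds hx', hint.aestronglyMeasurable⟩
      (hc.continuousAt (Ici_mem_nhds hx'))).hasDerivWithinAt

lemma tail_eq {f : ℝ → ℝ} {R : ℝ} (hint : IntegrableOn f (Ioi R)) :
    ∀ u ∈ Ici R, ∫ t in Ioi u, f t = (∫ t in Ioi R, f t) - ∫ t in R..u, f t := by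
  intro u hu
  have hsplit : ∫ t in Ioc R u ∪ Ioi u, f t = (∫ t in Ioc R u, f t) + ∫ t in Ioi u, f t :=
    setIntegral_union (Ioc_disjoint_Ioi le_rfl) measurableSet_Ioi
      (hint.mono_set Ioc_subset_Ioi_self) (hint.mono_set (Ioi_subset_Ioi hu))
  rw [Ioc_union_Ioi_eq_Ioi hu] at hsplit
  rw [intervalIntegral.integral_of_le hu, hsplit]
  ring

lemma tail_hasDerivWithinAt {f : ℝ → ℝ} {R x : ℝ} (hx : x ∈ Ici R)
    (hint : IntegrableOn f (Ioi R)) (hc : ContinuousOn f (Ici R)) :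
    HasDerivWithinAt (fun u => ∫ t in Ioi u, f t) (-f x) (Ici R) x := by
  have h1 := ((primitive_hasDerivWithinAt hx hint hc).const_sub (∫ t in Ioi R, f t))
  exact h1.congr (tail_eq hint) (tail_eq hint x hx)

lemma eta_bdd {R : ℝ} {η : ℝ → ℝ} (hηc : ContinuousOn η (Ici R))
    (hη0 : Tendsto η atTop (nhds 0)) :
    ∃ M : ℝ, 0 ≤ M ∧ ∀ ξ ∈ Ici R, |η ξ| ≤ M := by
  have h1 : ∀ᶠ ξ in atTop, |η ξ| < 1 := by
    have := hη0.eventually (eventually_nhds_iff.2 ⟨Metric.ball 0 1, fun y hy => by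
      simpa [Real.dist_eq] using hy, Metric.isOpen_ball, by simp⟩)
    simpa using this
  obtain ⟨x₀, hx₀⟩ := eventually_atTop.1 h1
  obtain ⟨C, hC⟩ := (isCompact_Icc (a := R) (b := x₀)).exists_bound_of_continuousOn
    (hηc.mono Icc_subset_Ici_self)
  refine ⟨max C 1, le_max_of_le_right zero_le_one, fun ξ hξ => ?_⟩
  rcases le_total ξ x₀ with h | h
  · exact le_max_of_le_left (by simpa [Real.norm_eq_abs] using hC ξ ⟨hξ, h⟩)
  · exact le_max_of_le_right (hx₀ ξ h).le

lemma g_bound {b R x C : ℝ} {η : ℝ → ℝ} (hb : 0 < b) (hR : 0 < R) (hx : R ≤ x)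
    (hηc : ContinuousOn η (Ici R)) (hC : ∀ ξ ∈ Ici x, |η ξ| ≤ C) :
    IntegrableOn (fun ξ => ξ * Real.exp (-(b / 4) * (ξ ^ 2 - x ^ 2)) * η ξ) (Ioi x) ∧
    |∫ ξ in Ioi x, ξ * Real.exp (-(b / 4) * (ξ ^ 2 - x ^ 2)) * η ξ| ≤ 2 / b * C := by
  have hx0 : 0 < x := hR.trans_le hx
  have hkint := kexp_integrableOn b x hb hx0.le
  have hmeas : AEStronglyMeasurable
      (fun ξ => ξ * Real.exp (-(b / 4) * (ξ ^ 2 - x ^ 2)) * η ξ) (volume.restrict (Ioi x)) := by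
    refine ContinuousOn.aestronglyMeasurable ?_ measurableSet_Ioi
    exact ContinuousOn.mul (Continuous.continuousOn (by continuity))
      (hηc.mono (fun t ht => hx.trans (le_of_lt ht)))
  have hbd : ∀ᵐ ξ ∂(volume.restrict (Ioi x)),
      ‖ξ * Real.exp (-(b / 4) * (ξ ^ 2 - x ^ 2)) * η ξ‖
        ≤ C * (ξ * Real.exp (-(b / 4) * (ξ ^ 2 - x ^ 2))) := by
    filter_upwards [ae_restrict_mem measurableSet_Ioi] with ξ hξ
    have hξ0 : 0 ≤ ξ := hx0.le.trans (le_of_lt hξ)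
    have he : 0 ≤ ξ * Real.exp (-(b / 4) * (ξ ^ 2 - x ^ 2)) :=
      mul_nonneg hξ0 (Real.exp_pos _).le
    calc ‖ξ * Real.exp (-(b / 4) * (ξ ^ 2 - x ^ 2)) * η ξ‖
        = (ξ * Real.exp (-(b / 4) * (ξ ^ 2 - x ^ 2))) * |η ξ| := by
          rw [Real.norm_eq_abs, abs_mul, abs_of_nonneg he]
      _ ≤ (ξ * Real.exp (-(b / 4) * (ξ ^ 2 - x ^ 2))) * C :=
          mul_le_mul_of_nonneg_left (hC ξ (mem_Ici.2 (le_of_lt hξ))) he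
      _ = C * (ξ * Real.exp (-(b / 4) * (ξ ^ 2 - x ^ 2))) := by ring
  have hint : IntegrableOn (fun ξ => ξ * Real.exp (-(b / 4) * (ξ ^ 2 - x ^ 2)) * η ξ) (Ioi x) :=
    Integrable.mono' (hkint.const_mul C) hmeas hbd
  refine ⟨hint, ?_⟩
  calc |∫ ξ in Ioi x, ξ * Real.exp (-(b / 4) * (ξ ^ 2 - x ^ 2)) * η ξ|
      ≤ ∫ ξ in Ioi x, ‖ξ * Real.exp (-(b / 4) * (ξ ^ 2 - x ^ 2)) * η ξ‖ := by
        rw [← Real.norm_eq_abs]; exact norm_integral_le_integral_norm _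
    _ ≤ ∫ ξ in Ioi x, C * (ξ * Real.exp (-(b / 4) * (ξ ^ 2 - x ^ 2))) :=
        integral_mono_ae hint.norm (hkint.const_mul C) hbd
    _ = C * ∫ ξ in Ioi x, ξ * Real.exp (-(b / 4) * (ξ ^ 2 - x ^ 2)) := by
        rw [MeasureTheory.integral_const_mul]
    _ = 2 / b * C := by rw [kexp_integral b x hb hx0.le]; ring

lemma g_continuousOn {b R : ℝ} {η : ℝ → ℝ} (hb : 0 < b) (hR : 0 < R)
    (hηc : ContinuousOn η (Ici R)) (hη0 : Tendsto η atTop (nhds 0)) :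
    ContinuousOn (fun x => ∫ ξ in Ioi x, ξ * Real.exp (-(b / 4) * (ξ ^ 2 - x ^ 2)) * η ξ)
      (Ici R) := by
  obtain ⟨M, hM0, hM⟩ := eta_bdd hηc hη0
  set h : ℝ → ℝ := fun ξ => ξ * Real.exp (-(b / 4) * ξ ^ 2) * η ξ with hh
  have hhc : ContinuousOn h (Ici R) :=
    ContinuousOn.mul (Continuous.continuousOn (by continuity)) hηc
  have hk0 : IntegrableOn (fun ξ : ℝ => ξ * Real.exp (-(b / 4) * ξ ^ 2)) (Ioi R) := by
    have := (kexp_integrableOn b 0 hb le_rfl).mono_set (Ioi_subset_Ioi hR.le)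
    simpa using this
  have hhint : IntegrableOn h (Ioi R) := by
    refine Integrable.mono' (hk0.const_mul M)
      ((hhc.mono Ioi_subset_Ici_self).aestronglyMeasurable measurableSet_Ioi) ?_
    filter_upwards [ae_restrict_mem measurableSet_Ioi] with ξ hξ
    have hξ0 : 0 ≤ ξ := (hR.trans hξ).le
    have he : 0 ≤ ξ * Real.exp (-(b / 4) * ξ ^ 2) := mul_nonneg hξ0 (Real.exp_pos _).le
    calc ‖h ξ‖ = (ξ * Real.exp (-(b / 4) * ξ ^ 2)) * |η ξ| := by
          rw [hh, Real.norm_eq_abs, abs_mul, abs_of_nonneg he]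
      _ ≤ (ξ * Real.exp (-(b / 4) * ξ ^ 2)) * M :=
          mul_le_mul_of_nonneg_left (hM ξ (mem_Ici.2 (le_of_lt hξ))) he
      _ = M * (ξ * Real.exp (-(b / 4) * ξ ^ 2)) := by ring
  have hG : ContinuousOn (fun x => ∫ ξ in Ioi x, h ξ) (Ici R) :=
    fun x hx => (tail_hasDerivWithinAt hx hhint hhc).continuousWithinAt
  have hcont : ContinuousOn (fun x => Real.exp (b / 4 * x ^ 2) * ∫ ξ in Ioi x, h ξ) (Ici R) :=
    ContinuousOn.mul (Continuous.continuousOn (by continuity)) hG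
  refine hcont.congr fun x _ => ?_
  beta_reduce
  rw [← MeasureTheory.integral_const_mul]
  refine congrArg (fun z => z) ?_
  refine integral_congr_ae (Eventually.of_forall fun ξ => ?_)
  show ξ * Real.exp (-(b / 4) * (ξ ^ 2 - x ^ 2)) * η ξ
      = Real.exp (b / 4 * x ^ 2) * (ξ * Real.exp (-(b / 4) * ξ ^ 2) * η ξ)
  rw [show -(b / 4) * (ξ ^ 2 - x ^ 2) = b / 4 * x ^ 2 + -(b / 4) * ξ ^ 2 by ring,
    Real.exp_add]
  ring

/-- The representation formula for the solution of `w'' - (b/2)(s w' - w) = η`. -/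
noncomputable def wrep (b : ℝ) (η : ℝ → ℝ) (s : ℝ) : ℝ :=
  s * ∫ x in Set.Ioi s, (x ^ 2)⁻¹ *
    ∫ ξ in Set.Ioi x, ξ * Real.exp (-(b / 4) * (ξ ^ 2 - x ^ 2)) * η ξ

/-- Pointwise estimates: for every `s ∈ [R,∞)`,
`|s w'(s) - w(s)| ≤ (2/b)·sup_{ξ ≥ s} |η(ξ)|` and `|w(s)/s| ≤ (2/(b s))·sup_{ξ ≥ s} |η(ξ)|`. -/
theorem pointwise_boundary_estimates
    (b R : ℝ) (hb : 0 < b) (hR : 0 < R) (η : ℝ → ℝ)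
    (hηc : ContinuousOn η (Set.Ici R))
    (hη0 : Filter.Tendsto η Filter.atTop (nhds 0)) :
    ∀ s ∈ Set.Ici R, ∀ A : ℝ, (∀ ξ ∈ Set.Ici s, |η ξ| ≤ A) →
      |s * derivWithin (wrep b η) (Set.Ici R) s - wrep b η s| ≤ (2 / b) * A ∧
      |wrep b η s / s| ≤ (2 / (b * s)) * A := by

  obtain ⟨M, hM0, hM⟩ := eta_bdd hηc hη0
  set g : ℝ → ℝ := fun x => ∫ ξ in Ioi x, ξ * Real.exp (-(b / 4) * (ξ ^ 2 - x ^ 2)) * η ξ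
    with hgdef
  set f : ℝ → ℝ := fun x => (x ^ 2)⁻¹ * g x with hfdef
  have hwrep : ∀ u, wrep b η u = u * ∫ x in Ioi u, f x := fun u => rfl
  have hgc : ContinuousOn g (Ici R) := g_continuousOn hb hR hηc hη0
  have hfc : ContinuousOn f (Ici R) := by
    refine ContinuousOn.mul (ContinuousOn.inv₀ (Continuous.continuousOn (by continuity))
      (fun x hx => ?_)) hgc
    have : (0:ℝ) < x := hR.trans_le hx
    positivity
  have hfint : IntegrableOn f (Ioi R) := by
    refine Integrable.mono' ((invsq_integrableOn hR).const_mul (2 / b * M))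
      ((hfc.mono Ioi_subset_Ici_self).aestronglyMeasurable measurableSet_Ioi) ?_
    filter_upwards [ae_restrict_mem measurableSet_Ioi] with x hx
    have hgb := (g_bound hb hR (le_of_lt hx) hηc
      (fun ξ hξ => hM ξ (mem_Ici.2 ((le_of_lt hx).trans hξ)))).2
    have hx2 : (0:ℝ) < x ^ 2 := by have := hR.trans hx; positivity
    calc ‖f x‖ = (x ^ 2)⁻¹ * |g x| := by
          rw [hfdef, Real.norm_eq_abs, abs_mul, abs_of_nonneg (inv_nonneg.2 hx2.le)]
      _ ≤ (x ^ 2)⁻¹ * (2 / b * M) :=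
          mul_le_mul_of_nonneg_left hgb (inv_nonneg.2 hx2.le)
      _ = 2 / b * M * (x ^ 2)⁻¹ := by ring
  intro s hs A hA
  have hs0 : 0 < s := hR.trans_le hs
  have hA0 : 0 ≤ A := (abs_nonneg _).trans (hA s self_mem_Ici)
  have hgA : ∀ x ∈ Ici s, |g x| ≤ 2 / b * A := fun x hx =>
    (g_bound hb hR (hs.trans hx) hηc (fun ξ hξ => hA ξ (mem_Ici.2 (hx.trans hξ)))).2
  have hF : HasDerivWithinAt (fun u => ∫ x in Ioi u, f x) (-f s) (Ici R) s :=
    tail_hasDerivWithinAt hs hfint hfc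
  have hW : HasDerivWithinAt (wrep b η)
      (1 * (∫ x in Ioi s, f x) + s * (-f s)) (Ici R) s := by
    have h2 := (hasDerivWithinAt_id s (Ici R)).fun_mul hF
    have h3 : wrep b η = fun u => u * ∫ x in Ioi u, f x := funext hwrep
    rw [h3]
    simpa using h2
  have hderiv : derivWithin (wrep b η) (Ici R) s
      = (∫ x in Ioi s, f x) - s * f s := by
    rw [hW.derivWithin (uniqueDiffOn_Ici R s hs)]; ring
  constructor
  · have h1 : s * derivWithin (wrep b η) (Ici R) s - wrep b η s = -(g s) := by
      rw [hderiv, hwrep s, hfdef]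
      have : s ^ 2 ≠ 0 := by positivity
      field_simp
      ring
    rw [h1, abs_neg]
    exact hgA s self_mem_Ici
  · have hfintS : IntegrableOn f (Ioi s) := hfint.mono_set (Ioi_subset_Ioi hs)
    have hbd : ∀ᵐ x ∂(volume.restrict (Ioi s)), ‖f x‖ ≤ 2 / b * A * (x ^ 2)⁻¹ := by
      filter_upwards [ae_restrict_mem measurableSet_Ioi] with x hx
      have hx2 : (0:ℝ) < x ^ 2 := by have := hs0.trans hx; positivity
      calc ‖f x‖ = (x ^ 2)⁻¹ * |g x| := by
            rw [hfdef, Real.norm_eq_abs, abs_mul, abs_of_nonneg (inv_nonneg.2 hx2.le)]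
        _ ≤ (x ^ 2)⁻¹ * (2 / b * A) :=
            mul_le_mul_of_nonneg_left (hgA x (mem_Ici.2 (le_of_lt hx))) (inv_nonneg.2 hx2.le)
        _ = 2 / b * A * (x ^ 2)⁻¹ := by ring
    have h2 : wrep b η s / s = ∫ x in Ioi s, f x := by
      rw [hwrep s, mul_div_cancel_left₀ _ (ne_of_gt hs0)]
    rw [h2]
    calc |∫ x in Ioi s, f x| ≤ ∫ x in Ioi s, ‖f x‖ := by
          rw [← Real.norm_eq_abs]; exact norm_integral_le_integral_norm _
      _ ≤ ∫ x in Ioi s, 2 / b * A * (x ^ 2)⁻¹ :=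
          integral_mono_ae hfintS.norm ((invsq_integrableOn hs0).const_mul _) hbd
      _ = 2 / b * A * s⁻¹ := by
          rw [MeasureTheory.integral_const_mul, invsq_integral hs0]
      _ = 2 / (b * s) * A := by field_simp
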